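/- (Theorem 3.4, prediction error bound.) Let A, Â ∈ ℂ^{n×n} be Hermitian matrices, τ > 0, and C ≥ 0 a constant such that ‖(A − Â) v‖₂ ≤ C ‖v‖₂ for all v ∈ ℂⁿ. Let (b_k)_{k≥0} be vectors in ℂⁿ, and let sequences (u_k)_{k≥0}, (x_k)_{k≥0} in ℂⁿ satisfy i (u_{k+1} − u_k)/τ = Â ((u_{k+1} + u_k)/2) + b_k for all k ≥ 0, x_{k+1} = (I + i(τ/2)A)⁻¹ (I − i(τ/2)A) x_k for all k ≥ 0, and x_0 = u_0. Then for every k ≥ 1, ‖u_k − x_k‖₂ ≤ τ ( Σ_{j=0}^{k−1} ‖b_j‖₂ + k · C · ‖u_0‖₂ ). -/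

import Mathlib

open Matrix

/-- The Euclidean (2-)norm of a vector in `ℂⁿ`: `‖x‖₂ = (∑ k |x_k|²)^{1/2}`. -/
noncomputable def euclNorm {n : ℕ} (v : Fin n → ℂ) : ℝ :=
  Real.sqrt (∑ k, ‖v k‖ ^ 2)

namespace CNDMD
variable {n : ℕ}

noncomputable def toE (v : Fin n → ℂ) : EuclideanSpace ℂ (Fin n) :=
  (WithLp.equiv 2 (Fin n → ℂ)).symm v

lemma toE_mulVec (M : Matrix (Fin n) (Fin n) ℂ) (v : Fin n → ℂ) :
    toE (M.mulVec v) = Matrix.toEuclideanLin M (toE v) := by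
  simp [toE, Matrix.toEuclideanLin_toLp, Matrix.toLin'_apply]

lemma inner_im_zero (M : Matrix (Fin n) (Fin n) ℂ) (hM : M.IsHermitian) (v : Fin n → ℂ) :
    (inner ℂ (toE v) (toE (M.mulVec v)) : ℂ).im = 0 := by
  have hs := Matrix.isHermitian_iff_isSymmetric.mp hM
  rw [toE_mulVec]
  have h1 : (inner ℂ (Matrix.toEuclideanLin M (toE v)) (toE v) : ℂ)
      = inner ℂ (toE v) (Matrix.toEuclideanLin M (toE v)) := hs (toE v) (toE v)
  have h2 := inner_conj_symm (𝕜 := ℂ) (toE v) (Matrix.toEuclideanLin M (toE v))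
  rw [h1] at h2
  exact Complex.conj_eq_iff_im.mp h2

lemma norm_sq_key (M : Matrix (Fin n) (Fin n) ℂ) (hM : M.IsHermitian)
    (c : ℂ) (hc : c.re = 0) (v : Fin n → ℂ) :
    ‖toE v + c • toE (M.mulVec v)‖ ^ 2
      = ‖toE v‖ ^ 2 + ‖c • toE (M.mulVec v)‖ ^ 2 := by
  have h := norm_add_sq (𝕜 := ℂ) (toE v) (c • toE (M.mulVec v))
  have hre : RCLike.re (inner ℂ (toE v) (c • toE (M.mulVec v)) : ℂ) = 0 := by
    rw [inner_smul_right]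
    have him := inner_im_zero M hM v
    rw [RCLike.re_to_complex, Complex.mul_re, hc, him]; ring
  rw [h, hre]; ring

lemma euclNorm_eq (v : Fin n → ℂ) : euclNorm v = ‖toE v‖ := by
  rw [EuclideanSpace.norm_eq]
  simp [euclNorm, toE]

lemma toE_add (v w : Fin n → ℂ) : toE (v + w) = toE v + toE w := rfl
lemma toE_sub (v w : Fin n → ℂ) : toE (v - w) = toE v - toE w := rfl
lemma toE_smul (z : ℂ) (v : Fin n → ℂ) : toE (z • v) = z • toE v := rfl

lemma mulVec_one_add (M : Matrix (Fin n) (Fin n) ℂ) (c : ℂ) (v : Fin n → ℂ) :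
    (1 + c • M).mulVec v = v + c • M.mulVec v := by
  rw [Matrix.add_mulVec, Matrix.one_mulVec, Matrix.smul_mulVec]

lemma mulVec_one_sub (M : Matrix (Fin n) (Fin n) ℂ) (c : ℂ) (v : Fin n → ℂ) :
    (1 - c • M).mulVec v = v - c • M.mulVec v := by
  rw [Matrix.sub_mulVec, Matrix.one_mulVec, Matrix.smul_mulVec]

lemma le_norm_P (M : Matrix (Fin n) (Fin n) ℂ) (hM : M.IsHermitian)
    (c : ℂ) (hc : c.re = 0) (v : Fin n → ℂ) :
    euclNorm v ≤ euclNorm ((1 + c • M).mulVec v) := by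
  rw [euclNorm_eq, euclNorm_eq, mulVec_one_add, toE_add, toE_smul]
  have h := norm_sq_key M hM c hc v
  nlinarith [norm_nonneg (toE v + c • toE (M.mulVec v)), norm_nonneg (toE v),
    sq_nonneg (‖c • toE (M.mulVec v)‖)]

lemma norm_PQ_eq (M : Matrix (Fin n) (Fin n) ℂ) (hM : M.IsHermitian)
    (c : ℂ) (hc : c.re = 0) (v : Fin n → ℂ) :
    euclNorm ((1 - c • M).mulVec v) = euclNorm ((1 + c • M).mulVec v) := by
  rw [euclNorm_eq, euclNorm_eq, mulVec_one_add, mulVec_one_sub, toE_add, toE_sub, toE_smul]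
  have h1 := norm_sq_key M hM c hc v
  have h2 := norm_sq_key M hM (-c) (by simp [hc]) v
  rw [neg_smul, ← sub_eq_add_neg, norm_neg] at h2
  have hsq : ‖toE v - c • toE (M.mulVec v)‖ ^ 2 = ‖toE v + c • toE (M.mulVec v)‖ ^ 2 := by
    rw [h1, h2]
  have ha := norm_nonneg (toE v - c • toE (M.mulVec v))
  have hb := norm_nonneg (toE v + c • toE (M.mulVec v))
  nlinarith

lemma euclNorm_zero : euclNorm (0 : Fin n → ℂ) = 0 := by
  simp [euclNorm]

lemma euclNorm_nonneg (v : Fin n → ℂ) : 0 ≤ euclNorm v := by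
  rw [euclNorm_eq]; exact norm_nonneg _

lemma euclNorm_add_le (v w : Fin n → ℂ) :
    euclNorm (v + w) ≤ euclNorm v + euclNorm w := by
  simp only [euclNorm_eq, toE_add]; exact norm_add_le _ _

lemma euclNorm_sub_le (v w : Fin n → ℂ) :
    euclNorm (v - w) ≤ euclNorm v + euclNorm w := by
  simp only [euclNorm_eq, toE_sub]; exact norm_sub_le _ _

lemma euclNorm_smul (z : ℂ) (v : Fin n → ℂ) :
    euclNorm (z • v) = ‖z‖ * euclNorm v := by
  simp only [euclNorm_eq, toE_smul]
  rw [norm_smul]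

lemma euclNorm_zero_of (v : Fin n → ℂ) (h : euclNorm v = 0) : v = 0 := by
  rw [euclNorm_eq, norm_eq_zero] at h
  have := congrArg (WithLp.equiv 2 (Fin n → ℂ)) h
  simpa [toE] using this

lemma isUnit_P (M : Matrix (Fin n) (Fin n) ℂ) (hM : M.IsHermitian)
    (c : ℂ) (hc : c.re = 0) : IsUnit (1 + c • M) := by
  rw [← Matrix.mulVec_injective_iff_isUnit]
  intro v w hvw
  have hz : (1 + c • M).mulVec (v - w) = 0 := by
    rw [Matrix.mulVec_sub, hvw, sub_self]
  have h0 := le_norm_P M hM c hc (v - w)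
  rw [hz, euclNorm_zero] at h0
  exact sub_eq_zero.mp (euclNorm_zero_of (v - w) (le_antisymm h0 (euclNorm_nonneg _)))

lemma inv_contraction (M : Matrix (Fin n) (Fin n) ℂ) (hM : M.IsHermitian)
    (c : ℂ) (hc : c.re = 0) (w : Fin n → ℂ) :
    euclNorm ((1 + c • M)⁻¹.mulVec w) ≤ euclNorm w := by
  have hdet : IsUnit (1 + c • M).det :=
    (Matrix.isUnit_iff_isUnit_det _).mp (isUnit_P M hM c hc)
  have h := le_norm_P M hM c hc ((1 + c • M)⁻¹.mulVec w)
  rwa [Matrix.mulVec_mulVec, Matrix.mul_nonsing_inv _ hdet, Matrix.one_mulVec] at h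

lemma inv_comm (P Q : Matrix (Fin n) (Fin n) ℂ) (h : Commute P Q)
    (hdet : IsUnit P.det) : Q * P⁻¹ = P⁻¹ * Q := by
  calc Q * P⁻¹ = P⁻¹ * (P * Q) * P⁻¹ := by
        rw [Matrix.nonsing_inv_mul_cancel_left _ _ hdet]
    _ = P⁻¹ * (Q * P) * P⁻¹ := by rw [h.eq]
    _ = P⁻¹ * Q := by
        rw [Matrix.mul_assoc P⁻¹ (Q * P) P⁻¹, Matrix.mul_assoc Q P P⁻¹,
          Matrix.mul_nonsing_inv _ hdet, Matrix.mul_one]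

lemma one_sub_eq (M : Matrix (Fin n) (Fin n) ℂ) (c : ℂ) :
    (1 : Matrix (Fin n) (Fin n) ℂ) - c • M = 1 + (-c) • M := by
  rw [neg_smul, sub_eq_add_neg]

lemma isUnit_Q (M : Matrix (Fin n) (Fin n) ℂ) (hM : M.IsHermitian)
    (c : ℂ) (hc : c.re = 0) : IsUnit ((1 : Matrix (Fin n) (Fin n) ℂ) - c • M) := by
  rw [one_sub_eq]
  exact isUnit_P M hM (-c) (by simp [hc])

lemma commute_PQ (M : Matrix (Fin n) (Fin n) ℂ) (c : ℂ) :
    Commute ((1 : Matrix (Fin n) (Fin n) ℂ) + c • M) (1 - c • M) := by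
  have h1 : Commute ((1 : Matrix (Fin n) (Fin n) ℂ) + c • M) 1 := Commute.one_right _
  have h2 : Commute ((1 : Matrix (Fin n) (Fin n) ℂ) + c • M) (c • M) :=
    (Commute.one_left (c • M)).add_left (Commute.refl (c • M))
  exact h1.sub_right h2

lemma S_isometry (M : Matrix (Fin n) (Fin n) ℂ) (hM : M.IsHermitian)
    (c : ℂ) (hc : c.re = 0) (w : Fin n → ℂ) :
    euclNorm (((1 + c • M)⁻¹ * (1 - c • M)).mulVec w) = euclNorm w := by
  set P : Matrix (Fin n) (Fin n) ℂ := 1 + c • M with hP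
  set Q : Matrix (Fin n) (Fin n) ℂ := 1 - c • M with hQ
  have hdetP : IsUnit P.det := (Matrix.isUnit_iff_isUnit_det _).mp (isUnit_P M hM c hc)
  have hdetQ : IsUnit Q.det := (Matrix.isUnit_iff_isUnit_det _).mp (isUnit_Q M hM c hc)
  have hcomm : Q * P⁻¹ = P⁻¹ * Q := inv_comm P Q (commute_PQ M c) hdetP
  set y : Fin n → ℂ := Q⁻¹.mulVec w with hy
  have hw : Q.mulVec y = w := by
    rw [hy, Matrix.mulVec_mulVec, Matrix.mul_nonsing_inv _ hdetQ, Matrix.one_mulVec]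
  calc euclNorm ((P⁻¹ * Q).mulVec w)
      = euclNorm ((P⁻¹ * Q).mulVec (Q.mulVec y)) := by rw [hw]
    _ = euclNorm (Q.mulVec ((P⁻¹ * Q).mulVec y)) := by
        simp only [Matrix.mulVec_mulVec]
        rw [← Matrix.mul_assoc Q P⁻¹ Q, hcomm]
    _ = euclNorm (P.mulVec ((P⁻¹ * Q).mulVec y)) := norm_PQ_eq M hM c hc _
    _ = euclNorm (Q.mulVec y) := by
        rw [Matrix.mulVec_mulVec, ← Matrix.mul_assoc, Matrix.mul_nonsing_inv _ hdetP,
          Matrix.one_mul]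
    _ = euclNorm w := by rw [hw]

lemma S_diff (A B : Matrix (Fin n) (Fin n) ℂ) (hA : A.IsHermitian) (hB : B.IsHermitian)
    (c : ℂ) (hc : c.re = 0) :
    (1 + c • B)⁻¹ * (1 - c • B) - (1 + c • A)⁻¹ * (1 - c • A)
      = (2 * c) • ((1 + c • B)⁻¹ * ((A - B) * (1 + c • A)⁻¹)) := by
  set P : Matrix (Fin n) (Fin n) ℂ := 1 + c • A with hP
  set Q : Matrix (Fin n) (Fin n) ℂ := 1 - c • A with hQ
  set Ph : Matrix (Fin n) (Fin n) ℂ := 1 + c • B with hPh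
  set Qh : Matrix (Fin n) (Fin n) ℂ := 1 - c • B with hQh
  have hdetP : IsUnit P.det := (Matrix.isUnit_iff_isUnit_det _).mp (isUnit_P A hA c hc)
  have hdetPh : IsUnit Ph.det := (Matrix.isUnit_iff_isUnit_det _).mp (isUnit_P B hB c hc)
  have hcomm : Q * P⁻¹ = P⁻¹ * Q := inv_comm P Q (commute_PQ A c) hdetP
  have hmid : Qh * P - Ph * Q = (2 * c) • (A - B) := by
    rw [hP, hQ, hPh, hQh]
    simp only [mul_add, add_mul, sub_mul, mul_sub, one_mul, mul_one, smul_mul_assoc,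
      mul_smul_comm, smul_smul, smul_sub, smul_add, two_mul, add_smul]
    abel
  have hexp : Ph⁻¹ * (Qh * P - Ph * Q) * P⁻¹ = Ph⁻¹ * Qh - P⁻¹ * Q := by
    rw [mul_sub, sub_mul, ← Matrix.mul_assoc Ph⁻¹ Qh P,
      Matrix.mul_nonsing_inv_cancel_right _ _ hdetP,
      Matrix.nonsing_inv_mul_cancel_left _ _ hdetPh, hcomm]
  calc Ph⁻¹ * Qh - P⁻¹ * Q = Ph⁻¹ * (Qh * P - Ph * Q) * P⁻¹ := hexp.symm
    _ = (2 * c) • (Ph⁻¹ * ((A - B) * P⁻¹)) := by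
        rw [hmid, mul_smul_comm, smul_mul_assoc, Matrix.mul_assoc]

end CNDMD


open CNDMD

/-- **Theorem 3.4, prediction error bound.** Let `A, Â ∈ ℂ^{n×n}` be Hermitian,
`τ > 0`, and `C ≥ 0` with `‖(A − Â) v‖₂ ≤ C ‖v‖₂` for all `v`.  If
`i (u_{k+1} − u_k)/τ = Â ((u_{k+1} + u_k)/2) + b_k`,
`x_{k+1} = (I + i(τ/2)A)⁻¹ (I − i(τ/2)A) x_k`, and `x_0 = u_0`, then for every `k ≥ 1`,
`‖u_k − x_k‖₂ ≤ τ (∑_{j=0}^{k−1} ‖b_j‖₂ + k C ‖u_0‖₂)`. -/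
theorem cnDMD_prediction_error_bound (n : ℕ) (A Ahat : Matrix (Fin n) (Fin n) ℂ)
    (hA : A.IsHermitian) (hAhat : Ahat.IsHermitian) (τ : ℝ) (hτ : 0 < τ)
    (C : ℝ) (hC : 0 ≤ C)
    (hbound : ∀ v : Fin n → ℂ, euclNorm ((A - Ahat).mulVec v) ≤ C * euclNorm v)
    (b : ℕ → Fin n → ℂ) (u x : ℕ → Fin n → ℂ)
    (hu : ∀ k : ℕ, (Complex.I / (τ : ℂ)) • (u (k + 1) - u k) =
      Ahat.mulVec ((2 : ℂ)⁻¹ • (u (k + 1) + u k)) + b k)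
    (hx : ∀ k : ℕ, x (k + 1) =
      ((1 + (Complex.I * ((τ : ℂ) / 2)) • A)⁻¹ *
          (1 - (Complex.I * ((τ : ℂ) / 2)) • A)).mulVec (x k))
    (h0 : x 0 = u 0) :
    ∀ k : ℕ, 1 ≤ k → euclNorm (u k - x k) ≤
      τ * ((∑ j ∈ Finset.range k, euclNorm (b j)) + (k : ℝ) * C * euclNorm (u 0)) := by
  have hτ0 : (τ : ℂ) ≠ 0 := by
    exact_mod_cast Complex.ofReal_ne_zero.mpr (ne_of_gt hτ)
  set c : ℂ := Complex.I * ((τ : ℂ) / 2) with hcdef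
  have hc : c.re = 0 := by
    simp [hcdef, Complex.mul_re, Complex.div_re, Complex.div_im]
  set P : Matrix (Fin n) (Fin n) ℂ := 1 + c • A with hP
  set Q : Matrix (Fin n) (Fin n) ℂ := 1 - c • A with hQ
  set Ph : Matrix (Fin n) (Fin n) ℂ := 1 + c • Ahat with hPh
  set Qh : Matrix (Fin n) (Fin n) ℂ := 1 - c • Ahat with hQh
  have hdetP : IsUnit P.det := (Matrix.isUnit_iff_isUnit_det _).mp (isUnit_P A hA c hc)
  have hdetPh : IsUnit Ph.det := (Matrix.isUnit_iff_isUnit_det _).mp (isUnit_P Ahat hAhat c hc)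
  -- the u-recursion in Crank–Nicolson form
  have hurec : ∀ k, Ph.mulVec (u (k + 1)) = Qh.mulVec (u k) - (Complex.I * τ) • b k := by
    intro k
    have h := hu k
    rw [Matrix.mulVec_smul, Matrix.mulVec_add] at h
    have h2 := congrArg (fun w => (-(Complex.I * (τ : ℂ))) • w) h
    simp only [smul_add, smul_smul, smul_sub] at h2
    have e1 : -(Complex.I * (τ : ℂ)) * (Complex.I / (τ : ℂ)) = 1 := by
      field_simp
      linear_combination (-1 : ℂ) * Complex.I_sq
    have e2 : -(Complex.I * (τ : ℂ)) * (2 : ℂ)⁻¹ = -c := by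
      rw [hcdef]; ring
    simp only [e1, e2, one_smul] at h2
    rw [mulVec_one_add, mulVec_one_sub]
    linear_combination (norm := module) h2
  -- solved u-recursion
  have hurec2 : ∀ k, u (k + 1) =
      (Ph⁻¹ * Qh).mulVec (u k) - (Complex.I * τ) • Ph⁻¹.mulVec (b k) := by
    intro k
    have h4 : Ph⁻¹.mulVec (Ph.mulVec (u (k + 1))) = u (k + 1) := by
      rw [Matrix.mulVec_mulVec, Matrix.nonsing_inv_mul _ hdetPh, Matrix.one_mulVec]
    rw [← h4, hurec k, Matrix.mulVec_sub, Matrix.mulVec_mulVec, Matrix.mulVec_smul]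
  -- norms of x are conserved
  have hxnorm : ∀ k, euclNorm (x k) = euclNorm (u 0) := by
    intro k
    induction k with
    | zero => rw [h0]
    | succ k ih => rw [hx k, S_isometry A hA c hc, ih]
  -- one-step error bound
  have hstep : ∀ k, euclNorm (u (k + 1) - x (k + 1)) ≤
      euclNorm (u k - x k) + τ * C * euclNorm (u 0) + τ * euclNorm (b k) := by
    intro k
    have herr : u (k + 1) - x (k + 1) =
        (Ph⁻¹ * Qh).mulVec (u k - x k) + ((Ph⁻¹ * Qh) - (P⁻¹ * Q)).mulVec (x k)
          - (Complex.I * τ) • Ph⁻¹.mulVec (b k) := by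
      rw [hurec2 k, hx k]
      simp only [Matrix.mulVec_sub, Matrix.sub_mulVec]
      abel
    rw [herr]
    refine le_trans (euclNorm_sub_le _ _) ?_
    have t1 : euclNorm ((Ph⁻¹ * Qh).mulVec (u k - x k) +
        ((Ph⁻¹ * Qh) - (P⁻¹ * Q)).mulVec (x k)) ≤
        euclNorm (u k - x k) + τ * C * euclNorm (u 0) := by
      refine le_trans (euclNorm_add_le _ _) ?_
      have i1 : euclNorm ((Ph⁻¹ * Qh).mulVec (u k - x k)) = euclNorm (u k - x k) :=
        S_isometry Ahat hAhat c hc _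
      have i2 : euclNorm (((Ph⁻¹ * Qh) - (P⁻¹ * Q)).mulVec (x k)) ≤
          τ * C * euclNorm (u 0) := by
        rw [S_diff A Ahat hA hAhat c hc, Matrix.smul_mulVec, euclNorm_smul]
        have habs : ‖2 * c‖ = τ := by
          rw [hcdef]
          have : (2 : ℂ) * (Complex.I * ((τ : ℂ) / 2)) = Complex.I * (τ : ℂ) := by ring
          rw [this, norm_mul, Complex.norm_I, Complex.norm_real, Real.norm_eq_abs, one_mul,
            abs_of_pos hτ]
        rw [habs]
        have j1 : euclNorm ((Ph⁻¹ * ((A - Ahat) * P⁻¹)).mulVec (x k)) ≤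
            C * euclNorm (x k) := by
          rw [← Matrix.mulVec_mulVec, ← Matrix.mulVec_mulVec]
          refine le_trans (inv_contraction Ahat hAhat c hc _) ?_
          refine le_trans (hbound _) ?_
          exact mul_le_mul_of_nonneg_left (inv_contraction A hA c hc _) hC
        rw [hxnorm k] at j1
        calc τ * euclNorm ((Ph⁻¹ * ((A - Ahat) * P⁻¹)).mulVec (x k))
            ≤ τ * (C * euclNorm (u 0)) :=
              mul_le_mul_of_nonneg_left j1 (le_of_lt hτ)
          _ = τ * C * euclNorm (u 0) := by ring
      rw [i1]
      exact add_le_add le_rfl i2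
    have t2 : euclNorm ((Complex.I * (τ : ℂ)) • Ph⁻¹.mulVec (b k)) ≤ τ * euclNorm (b k) := by
      rw [euclNorm_smul, norm_mul, Complex.norm_I, Complex.norm_real, Real.norm_eq_abs, one_mul,
        abs_of_pos hτ]
      exact mul_le_mul_of_nonneg_left (inv_contraction Ahat hAhat c hc _) (le_of_lt hτ)
    linarith
  -- main induction
  have main : ∀ k : ℕ, euclNorm (u k - x k) ≤
      τ * ((∑ j ∈ Finset.range k, euclNorm (b j)) + (k : ℝ) * C * euclNorm (u 0)) := by
    intro k
    induction k with
    | zero => simp [h0, euclNorm_zero]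
    | succ k ih =>
      have hsum : ∑ j ∈ Finset.range (k + 1), euclNorm (b j)
          = (∑ j ∈ Finset.range k, euclNorm (b j)) + euclNorm (b k) :=
        Finset.sum_range_succ _ _
      have hrhs : τ * ((∑ j ∈ Finset.range (k + 1), euclNorm (b j)) +
            ((k : ℝ) + 1) * C * euclNorm (u 0))
          = τ * ((∑ j ∈ Finset.range k, euclNorm (b j)) + (k : ℝ) * C * euclNorm (u 0))
            + τ * C * euclNorm (u 0) + τ * euclNorm (b k) := by
        rw [hsum]; ring
      push_cast
      rw [hrhs]
      linarith [hstep k, ih]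
  intro k _
  exact main k
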